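/- arXiv:2111.09696 — 2 statements merged into one kernel-verified Lean document; each statement's English description precedes it below -/
import Mathlib

section
/- Let n ≥ 2, let G₁ and G₂ be simple graphs on Fin n, and let S(G) = {s i : i ∈ Fin n} ∪ {(s i + s j)/2 : G.Adj i j} be the point-set form of a graph G, where s are the centered standard simplex vertices. If L is a linear isometry equivalence of EuclideanSpace ℝ (Fin n) with L '' S(G₁) = S(G₂), then L maps the vertex set {s i : i ∈ Fin n} onto itself and maps the midpoint set {(s i + s j)/2 : G₁.Adj i j} onto {(s i + s j)/2 : G₂.Adj i j}. (That is, the restriction that vertices map to vertices and edge points map to edge points is automatic.) -/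
/-- The centered standard simplex vertices: `s i = e_i - (1/n) • ∑ j, e_j`,
where `e_i` is the standard basis of `EuclideanSpace ℝ (Fin n)`. -/
noncomputable def simplexPt (n : ℕ) (i : Fin n) : EuclideanSpace ℝ (Fin n) :=
  EuclideanSpace.single i (1 : ℝ) - ((1 : ℝ) / n) • ∑ j, EuclideanSpace.single j (1 : ℝ)

open RealInnerProductSpace

lemma sum_single_apply (n : ℕ) (k : Fin n) :
    (∑ j, EuclideanSpace.single j (1 : ℝ)) k = 1 := by
  rw [show (∑ j, EuclideanSpace.single j (1 : ℝ)) k = ∑ j, EuclideanSpace.single j (1:ℝ) k from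
    by rw [WithLp.ofLp_sum, Finset.sum_apply]]
  simp [EuclideanSpace.single_apply]

lemma simplexPt_apply (n : ℕ) (i k : Fin n) :
    simplexPt n i k = (if k = i then 1 else 0) - 1 / n := by
  simp [simplexPt, EuclideanSpace.single_apply, sum_single_apply]

lemma sum_simplexPt (n : ℕ) (hn : 0 < n) (i : Fin n) :
    ∑ k, simplexPt n i k = 0 := by
  have hn' : (n : ℝ) ≠ 0 := Nat.cast_ne_zero.mpr hn.ne'
  simp [simplexPt_apply, Finset.sum_sub_distrib, Finset.sum_ite_eq']
  field_simp
  norm_num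

lemma inner_simplexPt (n : ℕ) (hn : 0 < n) (i j : Fin n) :
    ⟪simplexPt n i, simplexPt n j⟫ = (if i = j then 1 else 0) - 1 / n := by
  rw [PiLp.inner_apply]
  have : ∀ k, ⟪simplexPt n i k, simplexPt n j k⟫
      = (if k = i then 1 else 0) * simplexPt n j k - (1/n) * simplexPt n j k := by
    intro k
    rw [RCLike.inner_apply, starRingEnd_apply, star_trivial, mul_comm (simplexPt n j k), simplexPt_apply, sub_mul]
  rw [Finset.sum_congr rfl fun k _ => this k, Finset.sum_sub_distrib]
  rw [← Finset.mul_sum, sum_simplexPt n hn j, mul_zero, sub_zero]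
  simp [ite_mul, simplexPt_apply, eq_comm]

lemma norm_sq_simplexPt (n : ℕ) (hn : 0 < n) (i : Fin n) :
    ‖simplexPt n i‖ ^ 2 = 1 - 1 / n := by
  rw [← real_inner_self_eq_norm_sq, inner_simplexPt n hn, if_pos rfl]

lemma norm_sq_mid (n : ℕ) (hn : 0 < n) (i j : Fin n) (hij : i ≠ j) :
    ‖(2 : ℝ)⁻¹ • (simplexPt n i + simplexPt n j)‖ ^ 2 = 1 / 2 - 1 / n := by
  rw [← real_inner_self_eq_norm_sq, real_inner_smul_left, real_inner_smul_right,
    real_inner_add_add_self, inner_simplexPt n hn, inner_simplexPt n hn,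
    inner_simplexPt n hn, if_pos rfl, if_pos rfl, if_neg hij]
  ring

/-- The coordinate-permutation map `M_σ` (the permutation matrix of `σ`), as a linear
isometry equivalence of `EuclideanSpace ℝ (Fin n)`. -/
noncomputable def Mperm (n : ℕ) (σ : Equiv.Perm (Fin n)) :
    EuclideanSpace ℝ (Fin n) ≃ₗᵢ[ℝ] EuclideanSpace ℝ (Fin n) :=
  LinearIsometryEquiv.piLpCongrLeft 2 ℝ ℝ σ

/-- The point-set form of a simple graph `G` on `Fin n`:
`S(G) = {s i : i} ∪ {(s i + s j)/2 : G.Adj i j}`. -/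
noncomputable def pointSet (n : ℕ) (G : SimpleGraph (Fin n)) :
    Set (EuclideanSpace ℝ (Fin n)) :=
  Set.range (simplexPt n) ∪
    {p | ∃ i j : Fin n, G.Adj i j ∧ p = (2 : ℝ)⁻¹ • (simplexPt n i + simplexPt n j)}

theorem isometry_maps_vertices_to_vertices_and_midpoints_to_midpoints
    (n : ℕ) (hn : 2 ≤ n) (G₁ G₂ : SimpleGraph (Fin n))
    (L : EuclideanSpace ℝ (Fin n) ≃ₗᵢ[ℝ] EuclideanSpace ℝ (Fin n))
    (hL : L '' pointSet n G₁ = pointSet n G₂) :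
    L '' Set.range (simplexPt n) = Set.range (simplexPt n) ∧
    L '' {p | ∃ i j : Fin n, G₁.Adj i j ∧ p = (2 : ℝ)⁻¹ • (simplexPt n i + simplexPt n j)} =
      {p | ∃ i j : Fin n, G₂.Adj i j ∧ p = (2 : ℝ)⁻¹ • (simplexPt n i + simplexPt n j)} := by
  have hn0 : 0 < n := lt_of_lt_of_le (by norm_num) hn
  have hV : ∀ x ∈ Set.range (simplexPt n), ‖x‖ ^ 2 = 1 - 1 / n := by
    rintro x ⟨i, rfl⟩; exact norm_sq_simplexPt n hn0 i
  have hM : ∀ (G : SimpleGraph (Fin n)) x,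
      x ∈ {p | ∃ i j : Fin n, G.Adj i j ∧ p = (2 : ℝ)⁻¹ • (simplexPt n i + simplexPt n j)} →
      ‖x‖ ^ 2 = 1 / 2 - 1 / n := by
    rintro G x ⟨i, j, hadj, rfl⟩; exact norm_sq_mid n hn0 i j hadj.ne
  have hne : (1 : ℝ) - 1 / n ≠ 1 / 2 - 1 / n := by
    intro h; have : (1 : ℝ) = 1 / 2 := by linarith
    norm_num at this
  constructor
  · apply Set.Subset.antisymm
    · rintro y ⟨x, hx, rfl⟩
      have h2 : L x ∈ pointSet n G₂ := hL ▸ ⟨x, Or.inl hx, rfl⟩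
      rcases h2 with h2 | h2
      · exact h2
      · exact absurd ((L.norm_map x ▸ hM G₂ (L x) h2).symm.trans (hV x hx)).symm hne
    · intro y hy
      have h2 : y ∈ L '' pointSet n G₁ := hL.symm ▸ Or.inl hy
      rcases h2 with ⟨x, hx | hx, rfl⟩
      · exact ⟨x, hx, rfl⟩
      · exact absurd ((L.norm_map x ▸ hV (L x) hy).symm.trans (hM G₁ x hx)) hne
  · apply Set.Subset.antisymm
    · rintro y ⟨x, hx, rfl⟩
      have h2 : L x ∈ pointSet n G₂ := hL ▸ ⟨x, Or.inr hx, rfl⟩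
      rcases h2 with h2 | h2
      · exact absurd ((L.norm_map x ▸ hV (L x) h2).symm.trans (hM G₁ x hx)) hne
      · exact h2
    · intro y hy
      have h2 : y ∈ L '' pointSet n G₁ := hL.symm ▸ Or.inr hy
      rcases h2 with ⟨x, hx | hx, rfl⟩
      · exact absurd ((L.norm_map x ▸ hM G₂ (L x) hy).symm.trans (hV x hx)).symm hne
      · exact ⟨x, hx, rfl⟩
end

section
/- Let n ≥ 1 and let s : Fin n → EuclideanSpace ℝ (Fin n) be the centered standard simplex vertices, s i = e_i − (1/n)·∑_j e_j. Then the centroid map on nonempty finite subsets is injective: if A and B are nonempty finsets of Fin n and (1/|A|)·∑_{i ∈ A} s i = (1/|B|)·∑_{i ∈ B} s i, then A = B. (Hence representing each hyperedge of a hypergraph by the mean point of the vertices it relates is a faithful encoding.) -/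
theorem centroid_injective_on_nonempty_finsets (n : ℕ) (hn : 1 ≤ n)
    (A B : Finset (Fin n)) (hA : A.Nonempty) (hB : B.Nonempty)
    (h : ((1 : ℝ) / A.card) • ∑ i ∈ A, simplexPt n i =
         ((1 : ℝ) / B.card) • ∑ i ∈ B, simplexPt n i) :
    A = B := by
  have hA0 : (0:ℝ) < A.card := by exact_mod_cast hA.card_pos
  have hB0 : (0:ℝ) < B.card := by exact_mod_cast hB.card_pos
  have hn0 : (0:ℝ) < n := by exact_mod_cast hn
  have key : ∀ (C : Finset (Fin n)) (k : Fin n), (0:ℝ) < C.card →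
      (((1 : ℝ) / C.card) • ∑ i ∈ C, simplexPt n i) k
        = (if k ∈ C then 1 else 0) / C.card - 1 / n := by
    intro C k hC
    have happ : ∀ (D : Finset (Fin n)) (f : Fin n → EuclideanSpace ℝ (Fin n)),
        (∑ i ∈ D, f i) k = ∑ i ∈ D, f i k := by
      intro D f
      rw [WithLp.ofLp_sum, Finset.sum_apply]
    have hone : (∑ j : Fin n, EuclideanSpace.single j (1:ℝ)) k = 1 := by
      rw [happ]
      simp [EuclideanSpace.single_apply]
    have hpt : ∀ i : Fin n, simplexPt n i k
        = (if k = i then (1:ℝ) else 0) - 1 / n := by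
      intro i
      show EuclideanSpace.single i (1:ℝ) k - ((1:ℝ)/n) * (∑ j, EuclideanSpace.single j (1:ℝ)) k = _
      rw [hone, EuclideanSpace.single_apply, mul_one]
    have hsum : (∑ i ∈ C, simplexPt n i) k
        = (if k ∈ C then 1 else 0) - C.card * (1 / n) := by
      rw [happ]
      simp only [hpt, Finset.sum_sub_distrib, Finset.sum_ite_eq, Finset.sum_const,
        nsmul_eq_mul]
    rw [show (((1 : ℝ) / C.card) • ∑ i ∈ C, simplexPt n i) k
        = ((1 : ℝ) / C.card) * (∑ i ∈ C, simplexPt n i) k from rfl, hsum]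
    have : (C.card:ℝ) ≠ 0 := ne_of_gt hC
    field_simp
  ext k
  have hk := congrArg (fun v : EuclideanSpace ℝ (Fin n) => v k) h
  simp only at hk
  rw [key A k hA0, key B k hB0] at hk
  have hk' : (if k ∈ A then (1:ℝ) else 0) / A.card
      = (if k ∈ B then (1:ℝ) else 0) / B.card := by linarith
  constructor <;> intro hmem
  · by_contra hB'
    simp only [hmem, hB', if_true, if_false, zero_div] at hk'
    have : (0:ℝ) < 1 / A.card := by positivity
    rw [hk'] at this
    exact lt_irrefl _ this
  · by_contra hA'
    simp only [hmem, hA', if_true, if_false, zero_div] at hk'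
    have : (0:ℝ) < 1 / B.card := by positivity
    rw [← hk'] at this
    exact lt_irrefl _ this
end
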